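/- Let n ≥ k ≥ 1. Any k-fold banned binary sequence problem of length n has at most (2^k − 1)·2^(n−k) solutions. -/

import Mathlib

/-- The common extension `X ∧ Z` of `X : [n]∖S → {0,1}` and `Z : S → {0,1}`. -/
def mergeSeq (n : ℕ) (S : Finset (Fin n)) (X : {i : Fin n // i ∉ S} → Bool)
    (Z : {i : Fin n // i ∈ S} → Bool) : Fin n → Bool :=
  fun i => if h : i ∈ S then Z ⟨i, h⟩ else X ⟨i, h⟩

/-- `Y` is a solution to the `k`-fold banned binary sequence problem `f` of length `n`:
for every `k`-element subset `S` of `[n]`, `Y|_S ∉ f(S, Y|_{[n]∖S})`. -/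
def IsSolution (n k : ℕ)
    (f : (S : Finset (Fin n)) → ({i : Fin n // i ∉ S} → Bool) →
      Set ({i : Fin n // i ∈ S} → Bool))
    (Y : Fin n → Bool) : Prop :=
  ∀ S : Finset (Fin n), S.card = k →
    (fun i : {i : Fin n // i ∈ S} => Y i.1) ∉ f S (fun i => Y i.1)

/-- Any `k`-fold banned binary sequence problem of length `n` (with `n ≥ k ≥ 1`)
has at most `(2^k − 1)·2^(n−k)` solutions. -/
theorem bbsp_card_solutions_le (n k : ℕ) (hk : 1 ≤ k) (hkn : k ≤ n)
    (f : (S : Finset (Fin n)) → ({i : Fin n // i ∉ S} → Bool) →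
      Set ({i : Fin n // i ∈ S} → Bool))
    (hne : ∀ (S : Finset (Fin n)) (X : {i : Fin n // i ∉ S} → Bool),
      S.card = k → (f S X).Nonempty) :
    {Y : Fin n → Bool | IsSolution n k f Y}.ncard ≤ (2 ^ k - 1) * 2 ^ (n - k) := by
  -- choose a fixed k-element subset S
  obtain ⟨S, -, hS⟩ := Finset.exists_subset_card_eq (s := (Finset.univ : Finset (Fin n))) (n := k)
    (by simpa using hkn)
  -- choose a banned function for each X
  set g : ({i : Fin n // i ∉ S} → Bool) → ({i : Fin n // i ∈ S} → Bool) :=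
    fun X => (hne S X hS).choose with hg
  have hgmem : ∀ X, g X ∈ f S X := fun X => (hne S X hS).choose_spec
  set B : Set (Fin n → Bool) :=
    {Y | (fun i : {i : Fin n // i ∈ S} => Y i.1) ≠ g (fun i => Y i.1)} with hB
  have hsub : {Y : Fin n → Bool | IsSolution n k f Y} ⊆ B := by
    intro Y hY
    intro hEq
    exact hY S hS (hEq ▸ hgmem _)
  have hEcard : (Bᶜ).ncard = 2 ^ (n - k) := by
    have e : (Bᶜ : Set (Fin n → Bool)) ≃ ({i : Fin n // i ∉ S} → Bool) :=
      { toFun := fun Y => fun i => Y.1 i.1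
        invFun := fun X => ⟨mergeSeq n S X (g X), by
          have hX : (fun i : {i : Fin n // i ∉ S} => mergeSeq n S X (g X) i.1) = X :=
            funext fun i => dif_neg i.2
          simp only [hB, Set.mem_compl_iff, Set.mem_setOf_eq, not_not, hX]
          funext i
          exact dif_pos i.2⟩
        left_inv := by
          rintro ⟨Y, hY⟩
          simp only [hB, Set.mem_compl_iff, Set.mem_setOf_eq, not_not] at hY
          ext i
          simp only [mergeSeq]
          split
          · rename_i h
            exact (congrFun hY.symm ⟨i, h⟩)
          · rfl
        right_inv := by
          intro X
          funext i
          exact dif_neg i.2 }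
    have : Nat.card (Bᶜ : Set (Fin n → Bool)) = 2 ^ (n - k) := by
      rw [Nat.card_congr e, Nat.card_eq_fintype_card]
      simp [Fintype.card_fun, Fintype.card_subtype_compl, hS]
    rw [← Nat.card_coe_set_eq]; exact this
  have hBcard : B.ncard = (2 ^ k - 1) * 2 ^ (n - k) := by
    have htot : B.ncard + (Bᶜ).ncard = 2 ^ n := by
      have := Set.ncard_add_ncard_compl B
      simpa [Nat.card_eq_fintype_card] using this
    have h2n : 2 ^ n = 2 ^ k * 2 ^ (n - k) := by
      rw [← pow_add]; congr 1; omega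
    have hle : 2 ^ (n - k) ≤ 2 ^ n := Nat.pow_le_pow_right (by norm_num) (by omega)
    have h1 : (1:ℕ) ≤ 2 ^ k := Nat.one_le_two_pow
    rw [hEcard] at htot
    have : B.ncard = 2 ^ n - 2 ^ (n - k) := by omega
    rw [this, h2n, Nat.sub_one_mul]
  rw [← hBcard]
  exact Set.ncard_le_ncard hsub (Set.toFinite B)
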